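/- Let τ_0 ≥ 0, let α, β, γ : [τ_0, ∞) → ℝ be continuous and nonnegative, and let μ : [τ_0, ∞) → ℝ be continuously differentiable with μ(t) > 0 for all t and μ(t) → ∞ as t → ∞. Assume that for all t ≥ τ_0: α(t) ≤ (μ(t)/2)·(γ(t) − μ'(t)/μ(t)) and β(t) ≤ (1/(2μ(t)))·(γ(t) − μ'(t)/μ(t)). Let g : [τ_0, ∞) → ℝ be differentiable and nonnegative, with μ(τ_0)g(τ_0) < 1 and g'(t) ≤ −γ(t)g(t) + α(t)g(t)² + β(t) for all t ≥ τ_0. Then 0 ≤ g(t) < 1/μ(t) for all t ≥ τ_0; in particular g(t) → 0 as t → ∞. -/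

import Mathlib

private lemma stmt10_aux_key (m mp gv gp av bv cv kv : ℝ) (hm : 0 < m) (hk : 0 ≤ kv)
    (hg : 0 ≤ gv) (hle : m * gv ≤ 1)
    (ha : av ≤ m / 2 * kv) (hb : bv ≤ 1 / (2 * m) * kv)
    (hgp : gp ≤ -cv * gv + av * gv ^ 2 + bv)
    (hmk : m * kv = m * cv - mp) :
    mp * gv + m * gp ≤ kv / 2 * (1 - m * gv) := by
  have h1 : m * gp ≤ m * (-cv * gv + av * gv ^ 2 + bv) :=
    mul_le_mul_of_nonneg_left hgp hm.le
  have h2 : m * bv ≤ kv / 2 := by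
    have hid : m * (1 / (2 * m) * kv) = kv / 2 := by field_simp
    have := mul_le_mul_of_nonneg_left hb hm.le
    linarith [this.trans_eq hid]
  have h3 : m * (av * gv ^ 2) ≤ kv / 2 * (m * gv) ^ 2 := by
    have := mul_le_mul_of_nonneg_right ha (mul_nonneg hm.le (sq_nonneg gv))
    nlinarith
  have h4g : mp * gv = (m * cv - m * kv) * gv := by
    have h4 : mp = m * cv - m * kv := by linarith
    rw [← h4]
  have h5 : 0 ≤ kv * ((1 - m * gv) * (m * gv)) :=
    mul_nonneg hk (mul_nonneg (by linarith) (mul_nonneg hm.le hg))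
  linarith [h1, h2, h3, h4g, h5]

private lemma stmt10_aux_deriv (E d w kv : ℝ) (hE : 0 < E)
    (hkey : d ≤ kv / 2 * (1 - w)) :
    0 ≤ -d * E + (1 - w) * (E * (kv / 2)) := by
  nlinarith [mul_le_mul_of_nonneg_right hkey hE.le]


theorem stmt10 (τ₀ : ℝ) (hτ₀ : 0 ≤ τ₀)
    (α β γ : ℝ → ℝ)
    (hαc : ContinuousOn α (Set.Ici τ₀)) (hβc : ContinuousOn β (Set.Ici τ₀))
    (hγc : ContinuousOn γ (Set.Ici τ₀))
    (hα0 : ∀ t ∈ Set.Ici τ₀, 0 ≤ α t) (hβ0 : ∀ t ∈ Set.Ici τ₀, 0 ≤ β t)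
    (hγ0 : ∀ t ∈ Set.Ici τ₀, 0 ≤ γ t)
    (μ μ' : ℝ → ℝ) (hμd : ∀ t ∈ Set.Ici τ₀, HasDerivAt μ (μ' t) t)
    (hμ'c : ContinuousOn μ' (Set.Ici τ₀))
    (hμpos : ∀ t ∈ Set.Ici τ₀, 0 < μ t)
    (hμlim : Filter.Tendsto μ Filter.atTop Filter.atTop)
    (hαμ : ∀ t ∈ Set.Ici τ₀, α t ≤ μ t / 2 * (γ t - μ' t / μ t))
    (hβμ : ∀ t ∈ Set.Ici τ₀, β t ≤ 1 / (2 * μ t) * (γ t - μ' t / μ t))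
    (g g' : ℝ → ℝ) (hgd : ∀ t ∈ Set.Ici τ₀, HasDerivAt g (g' t) t)
    (hg0 : ∀ t ∈ Set.Ici τ₀, 0 ≤ g t)
    (hinit : μ τ₀ * g τ₀ < 1)
    (hgineq : ∀ t ∈ Set.Ici τ₀, g' t ≤ -(γ t) * g t + α t * g t ^ 2 + β t) :
    (∀ t ∈ Set.Ici τ₀, 0 ≤ g t ∧ g t < 1 / μ t) ∧
      Filter.Tendsto g Filter.atTop (nhds 0) := by
  -- the "damping rate" k
  set k : ℝ → ℝ := fun t => γ t - μ' t / μ t with hkdef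
  have hμc : ContinuousOn μ (Set.Ici τ₀) := fun t ht =>
    (hμd t ht).continuousAt.continuousWithinAt
  have hgc : ContinuousOn g (Set.Ici τ₀) := fun t ht =>
    (hgd t ht).continuousAt.continuousWithinAt
  have hkc : ContinuousOn k (Set.Ici τ₀) :=
    hγc.sub (hμ'c.div hμc (fun t ht => (hμpos t ht).ne'))
  have hk0 : ∀ t ∈ Set.Ici τ₀, 0 ≤ k t := by
    intro t ht
    have h2 := (hα0 t ht).trans (hαμ t ht)
    have h3 := hμpos t ht
    show 0 ≤ γ t - μ' t / μ t
    by_contra hneg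
    push_neg at hneg
    nlinarith
  -- antiderivative of k/2
  set K : ℝ → ℝ := fun t => ∫ s in τ₀..t, k s / 2 with hKdef
  have hk2c : ContinuousOn (fun s => k s / 2) (Set.Ici τ₀) := hkc.div_const 2
  have hKd : ∀ x ∈ Set.Ioi τ₀, HasDerivAt K (k x / 2) x := by
    intro x hx
    have hx' : τ₀ ≤ x := le_of_lt hx
    exact intervalIntegral.integral_hasDerivAt_right
      ((hk2c.mono (by rw [Set.uIcc_of_le hx']; exact Set.Icc_subset_Ici_self)).intervalIntegrable)
      ((hk2c.mono Set.Ioi_subset_Ici_self).stronglyMeasurableAtFilter isOpen_Ioi x hx)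
      ((hk2c x hx').continuousAt (Ici_mem_nhds hx))
  -- the key pointwise inequality
  have key : ∀ x ∈ Set.Ici τ₀, μ x * g x ≤ 1 →
      μ' x * g x + μ x * g' x ≤ k x / 2 * (1 - μ x * g x) := by
    intro x hx hle
    have hμx := hμpos x hx
    have hα := hαμ x hx
    have hβ := hβμ x hx
    rw [show γ x - μ' x / μ x = k x from rfl] at hα hβ
    have hμk : μ x * k x = μ x * γ x - μ' x := by
      show μ x * (γ x - μ' x / μ x) = μ x * γ x - μ' x
      field_simp
    exact stmt10_aux_key (μ x) (μ' x) (g x) (g' x) (α x) (β x) (γ x) (k x)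
      hμx (hk0 x hx) (hg0 x hx) hle hα hβ (hgineq x hx) hμk
  -- main claim: μ t * g t < 1 on [τ₀, ∞)
  have hmain : ∀ t ∈ Set.Ici τ₀, μ t * g t < 1 := by
    by_contra hcon
    push_neg at hcon
    obtain ⟨t', ht', hge'⟩ := hcon
    set B : Set ℝ := Set.Ici τ₀ ∩ (fun t => μ t * g t) ⁻¹' Set.Ici 1 with hBdef
    have hBne : B.Nonempty := ⟨t', ht', hge'⟩
    have hBbdd : BddBelow B := ⟨τ₀, fun t ht => ht.1⟩
    have hBclosed : IsClosed B :=
      (hμc.mul hgc).preimage_isClosed_of_isClosed isClosed_Ici isClosed_Ici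
    set t₁ := sInf B with ht₁def
    have ht₁B : t₁ ∈ B := hBclosed.csInf_mem hBne hBbdd
    have ht₁Ici : t₁ ∈ Set.Ici τ₀ := ht₁B.1
    have ht₁ge : 1 ≤ μ t₁ * g t₁ := ht₁B.2
    have ht₁gt : τ₀ < t₁ := by
      rcases lt_or_eq_of_le (Set.mem_Ici.mp ht₁Ici) with h | h
      · exact h
      · rw [← h] at ht₁ge; linarith
    have hlt : ∀ t ∈ Set.Ico τ₀ t₁, μ t * g t < 1 := by
      intro t ht
      by_contra hge''
      push_neg at hge''
      exact absurd (csInf_le hBbdd ⟨ht.1, hge''⟩) (not_le.mpr ht.2)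
    -- h t₁ ≤ 1 by continuity from the left
    have hht₁le : μ t₁ * g t₁ ≤ 1 := by
      have hc : Filter.Tendsto (fun t => μ t * g t) (nhdsWithin t₁ (Set.Iio t₁))
          (nhds (μ t₁ * g t₁)) :=
        ((hμd t₁ ht₁Ici).continuousAt.mul (hgd t₁ ht₁Ici).continuousAt).continuousWithinAt
      refine le_of_tendsto hc ?_
      filter_upwards [Ioo_mem_nhdsLT_of_mem ⟨ht₁gt, le_refl t₁⟩] with t ht
      exact (hlt t ⟨ht.1.le, ht.2⟩).le
    have hht₁ : μ t₁ * g t₁ = 1 := le_antisymm hht₁le ht₁ge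
    -- the auxiliary function v
    set v : ℝ → ℝ := fun t => (1 - μ t * g t) * Real.exp (K t) with hvdef
    have hIcc : Set.Icc τ₀ t₁ ⊆ Set.Ici τ₀ := Set.Icc_subset_Ici_self
    have hKc : ContinuousOn K (Set.Icc τ₀ t₁) := by
      have : Set.uIcc τ₀ t₁ = Set.Icc τ₀ t₁ := Set.uIcc_of_le ht₁gt.le
      have hint : MeasureTheory.IntegrableOn (fun s => k s / 2) (Set.uIcc τ₀ t₁) := by
        rw [this]
        exact (hk2c.mono hIcc).integrableOn_compact isCompact_Icc
      have := intervalIntegral.continuousOn_primitive_interval hint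
      rwa [Set.uIcc_of_le ht₁gt.le] at this
    have hvc : ContinuousOn v (Set.Icc τ₀ t₁) := by
      exact ((continuousOn_const.sub ((hμc.mono hIcc).mul (hgc.mono hIcc))).mul
        (Real.continuous_exp.comp_continuousOn hKc))
    have hvD : ∀ x ∈ interior (Set.Icc τ₀ t₁),
        HasDerivAt v ((-(μ' x * g x + μ x * g' x)) * Real.exp (K x)
          + (1 - μ x * g x) * (Real.exp (K x) * (k x / 2))) x := by
      intro x hx
      rw [interior_Icc] at hx
      have hxI : x ∈ Set.Ici τ₀ := le_of_lt hx.1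
      have hd1 : HasDerivAt (fun t => 1 - μ t * g t) (-(μ' x * g x + μ x * g' x)) x :=
        ((hμd x hxI).mul (hgd x hxI)).const_sub 1
      have hd2 : HasDerivAt (fun t => Real.exp (K t)) (Real.exp (K x) * (k x / 2)) x :=
        (hKd x hx.1).exp
      exact hd1.mul hd2
    have hvmono : MonotoneOn v (Set.Icc τ₀ t₁) := by
      apply monotoneOn_of_deriv_nonneg (convex_Icc τ₀ t₁) hvc
      · intro x hx
        exact (hvD x hx).differentiableAt.differentiableWithinAt
      · intro x hx
        rw [(hvD x hx).deriv]
        have hx' := hx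
        rw [interior_Icc] at hx'
        have hxI : x ∈ Set.Ici τ₀ := le_of_lt hx'.1
        have hle1 : μ x * g x ≤ 1 := (hlt x ⟨hx'.1.le, hx'.2⟩).le
        have hkey := key x hxI hle1
        exact stmt10_aux_deriv (Real.exp (K x)) _ _ _ (Real.exp_pos _) hkey
    have hv0 : v t₁ = 0 := by
      simp [hvdef, hht₁]
    have hvτ : 0 < v τ₀ := by
      apply mul_pos (by linarith) (Real.exp_pos _)
    have := hvmono ⟨le_refl τ₀, ht₁gt.le⟩ ⟨ht₁gt.le, le_refl t₁⟩ ht₁gt.le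
    rw [hv0] at this
    linarith
  -- conclusions
  have hconc : ∀ t ∈ Set.Ici τ₀, 0 ≤ g t ∧ g t < 1 / μ t := by
    intro t ht
    refine ⟨hg0 t ht, ?_⟩
    rw [lt_div_iff₀ (hμpos t ht)]
    have := hmain t ht
    linarith [this]
  refine ⟨hconc, ?_⟩
  have hupper : Filter.Tendsto (fun t => 1 / μ t) Filter.atTop (nhds 0) := by
    simpa [one_div, Pi.inv_def] using hμlim.inv_tendsto_atTop
  apply tendsto_of_tendsto_of_tendsto_of_le_of_le' tendsto_const_nhds hupper
  · filter_upwards [Filter.eventually_ge_atTop τ₀] with t ht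
    exact hg0 t ht
  · filter_upwards [Filter.eventually_ge_atTop τ₀] with t ht
    exact (hconc t ht).2.le
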